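/- For x, y in the open interval (0,1), the Rogers dilogarithm satisfies the five-term relation L(x) + L((1-x)/(1-xy)) + L((1-y)/(1-xy)) + L(y) + L(1-xy) = 3·L(1) = π²/2. -/

import Mathlib

open Real MeasureTheory Filter Set

/-- The dilogarithm, defined by its power series (convergent for `|x| ≤ 1`). -/
noncomputable def Li2 (x : ℝ) : ℝ := ∑' k : ℕ, x ^ (k + 1) / ((k : ℝ) + 1) ^ 2

/-- auxiliary integrand -/
noncomputable def gg (t : ℝ) : ℝ := -Real.log (1 - t) / t

lemma summable_inv_sq : Summable (fun k : ℕ => 1 / ((k : ℝ) + 1) ^ 2) := by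
  have := (summable_nat_add_iff (f := fun n : ℕ => 1 / (n : ℝ) ^ 2) 1).2
    ((Real.summable_one_div_nat_pow (p := 2)).2 one_lt_two)
  simpa using this

lemma gg_hasSum {t : ℝ} (ht : 0 < t) (ht1 : t < 1) :
    HasSum (fun k : ℕ => t ^ k / ((k : ℝ) + 1)) (gg t) := by
  have h := hasSum_pow_div_log_of_abs_lt_one (x := t) (by rw [abs_of_pos ht]; exact ht1)
  have h2 := h.div_const t
  refine h2.congr_fun fun k => ?_
  rw [pow_succ]
  field_simp

lemma gg_bounds {t : ℝ} (ht : 0 < t) (ht1 : t < 1) :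
    0 ≤ gg t ∧ gg t ≤ 1 / (1 - t) := by
  have h1t : 0 < 1 - t := by linarith
  constructor
  · apply div_nonneg _ ht.le
    simp only [neg_nonneg]
    exact Real.log_nonpos (by linarith) (by linarith)
  · have h3 : -Real.log (1 - t) ≤ t / (1 - t) := by
      have h4 := Real.log_le_sub_one_of_pos (x := (1 - t)⁻¹) (by positivity)
      rw [Real.log_inv] at h4
      have h5 : (1 - t)⁻¹ - 1 = t / (1 - t) := by field_simp; ring
      linarith
    rw [gg, div_le_div_iff₀ ht h1t]
    have h6 := (le_div_iff₀ h1t).mp h3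
    linarith

lemma gg_measurable : Measurable gg :=
  ((Real.measurable_log.comp (measurable_const.sub measurable_id)).neg.div measurable_id)

lemma gg_integrableOn {x : ℝ} (hx1 : x < 1) :
    IntegrableOn gg (Set.Ioc 0 x) := by
  apply Measure.integrableOn_of_bounded (M := 1 / (1 - x)) (by simp)
    gg_measurable.aestronglyMeasurable
  filter_upwards [ae_restrict_mem measurableSet_Ioc] with t ht
  obtain ⟨ht0, htx⟩ := ht
  have ht1 : t < 1 := lt_of_le_of_lt htx hx1
  obtain ⟨hg0, hg1⟩ := gg_bounds ht0 ht1
  rw [Real.norm_of_nonneg hg0]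
  calc gg t ≤ 1 / (1 - t) := hg1
    _ ≤ 1 / (1 - x) := by
        apply one_div_le_one_div_of_le (by linarith) (by linarith)

lemma Li2_eq_integral {x : ℝ} (hx0 : 0 ≤ x) (hx1 : x < 1) :
    Li2 x = ∫ t in Set.Ioc 0 x, gg t := by
  have hFint : ∀ k : ℕ, IntegrableOn (fun t => t ^ k / ((k : ℝ) + 1)) (Set.Ioc 0 x) :=
    fun k => (Continuous.integrableOn_Ioc (by fun_prop))
  have hint : ∀ k : ℕ, ∫ t in Set.Ioc 0 x, t ^ k / ((k : ℝ) + 1)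
      = x ^ (k + 1) / ((k : ℝ) + 1) ^ 2 := by
    intro k
    rw [← intervalIntegral.integral_of_le hx0, intervalIntegral.integral_div, integral_pow,
      zero_pow (Nat.succ_ne_zero k), sub_zero, div_div, ← sq]
  have hnorm : ∀ k : ℕ, ∫ t in Set.Ioc 0 x, ‖t ^ k / ((k : ℝ) + 1)‖
      = x ^ (k + 1) / ((k : ℝ) + 1) ^ 2 := by
    intro k
    rw [← hint k]
    apply setIntegral_congr_ae measurableSet_Ioc
    filter_upwards with t ht
    exact Real.norm_of_nonneg (div_nonneg (pow_nonneg ht.1.le k) (by positivity))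
  have hsum : Summable fun k : ℕ => ∫ t in Set.Ioc 0 x, ‖t ^ k / ((k : ℝ) + 1)‖ := by
    apply Summable.of_nonneg_of_le (fun k => integral_nonneg fun t => norm_nonneg _) _ summable_inv_sq
    intro k
    rw [hnorm k]
    gcongr
    · exact pow_le_one₀ hx0 hx1.le
  have hswap := integral_tsum_of_summable_integral_norm
    (F := fun (k : ℕ) (t : ℝ) => t ^ k / ((k : ℝ) + 1))
    (μ := volume.restrict (Set.Ioc 0 x)) hFint hsum
  have : Li2 x = ∑' k : ℕ, ∫ t in Set.Ioc 0 x, t ^ k / ((k : ℝ) + 1) := by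
    rw [Li2]
    exact tsum_congr fun k => (hint k).symm
  rw [this, hswap]
  apply setIntegral_congr_ae measurableSet_Ioc
  filter_upwards with t ht
  exact (gg_hasSum ht.1 (lt_of_le_of_lt ht.2 hx1)).tsum_eq

lemma hasDerivAt_Li2 {x : ℝ} (hx : x ∈ Set.Ioo (0 : ℝ) 1) :
    HasDerivAt Li2 (-Real.log (1 - x) / x) x := by
  obtain ⟨hx0, hx1⟩ := hx
  have hcont : ContinuousAt gg x := by
    apply ContinuousAt.div
    · exact ((Real.continuousAt_log (by linarith)).comp (by fun_prop)).neg
    · exact continuousAt_id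
    · exact ne_of_gt hx0
  have hF := intervalIntegral.integral_hasDerivAt_right (f := gg) (a := 0) (b := x)
    ((intervalIntegrable_iff_integrableOn_Ioc_of_le hx0.le).mpr (gg_integrableOn hx1))
    (gg_measurable.stronglyMeasurable.stronglyMeasurableAtFilter) hcont
  have heq : Li2 =ᶠ[nhds x] fun u => ∫ t in (0 : ℝ)..u, gg t := by
    filter_upwards [isOpen_Ioo.mem_nhds (Set.mem_Ioo.mpr ⟨hx0, hx1⟩)] with z hz
    rw [Li2_eq_integral hz.1.le hz.2, intervalIntegral.integral_of_le hz.1.le]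
  exact hF.congr_of_eventuallyEq heq


/-- The Rogers dilogarithm `L(x) = Li₂(x) + (1/2)·log x · log (1-x)`.
Since `Real.log 0 = 0`, this formula also gives the standard extended values
`L 0 = 0` and `L 1 = π²/6`. -/
noncomputable def RogersL (x : ℝ) : ℝ := Li2 x + (1 / 2) * Real.log x * Real.log (1 - x)


lemma hasDerivAt_RogersL {x : ℝ} (hx : x ∈ Set.Ioo (0 : ℝ) 1) :
    HasDerivAt RogersL (-(Real.log (1 - x) / x + Real.log x / (1 - x)) / 2) x := by
  obtain ⟨hx0, hx1⟩ := hx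
  have h1x : (0 : ℝ) < 1 - x := by linarith
  have hsub : HasDerivAt (fun t : ℝ => 1 - t) (-1) x := (hasDerivAt_id x).const_sub 1
  have hlog1 : HasDerivAt (fun t => Real.log (1 - t)) ((1 - x)⁻¹ * -1) x :=
    (Real.hasDerivAt_log h1x.ne').comp x hsub
  have hmul := ((Real.hasDerivAt_log hx0.ne').const_mul (1 / 2 : ℝ)).mul hlog1
  have hR := (hasDerivAt_Li2 ⟨hx0, hx1⟩).add hmul
  have hfun : RogersL = fun t => Li2 t + 1 / 2 * Real.log t * Real.log (1 - t) := rfl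
  rw [hfun]
  refine hR.congr_deriv ?_
  field_simp
  ring

lemma Li2_zero : Li2 0 = 0 := by simp [Li2]

lemma Li2_one : Li2 1 = π ^ 2 / 6 := by
  have h := hasSum_zeta_two
  have h2 := (hasSum_nat_add_iff' (f := fun n : ℕ => (1 : ℝ) / (n : ℝ) ^ 2) 1).2 h
  simp only [Finset.range_one, Finset.sum_singleton, Nat.cast_zero] at h2
  norm_num at h2
  rw [Li2]
  have h3 : HasSum (fun k : ℕ => (1 : ℝ) ^ (k + 1) / ((k : ℝ) + 1) ^ 2) (π ^ 2 / 6) := by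
    refine h2.congr_fun fun k => ?_
    norm_num
  exact h3.tsum_eq

lemma continuousOn_Li2 : ContinuousOn Li2 (Set.Icc 0 1) := by
  have hrfl : Li2 = fun x : ℝ => ∑' k : ℕ, x ^ (k + 1) / ((k : ℝ) + 1) ^ 2 := rfl
  rw [hrfl]
  refine continuousOn_tsum (f := fun (k : ℕ) (t : ℝ) => t ^ (k + 1) / ((k : ℝ) + 1) ^ 2)
    (u := fun k : ℕ => 1 / ((k : ℝ) + 1) ^ 2)
    (fun k => (by fun_prop : Continuous fun t : ℝ => t ^ (k + 1) / ((k : ℝ) + 1) ^ 2).continuousOn)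
    summable_inv_sq (fun k t ht => ?_)
  rw [Real.norm_of_nonneg (div_nonneg (pow_nonneg ht.1 _) (by positivity))]
  have hk : (0:ℝ) < ((k : ℝ) + 1) ^ 2 := by positivity
  exact (div_le_div_iff_of_pos_right hk).mpr (pow_le_one₀ ht.1 ht.2)

lemma tendsto_right_zero {f : ℝ → ℝ} (hf0 : f 0 = 0)
    (h : Tendsto f (nhdsWithin 0 (Set.Ioi 0)) (nhds 0)) :
    Tendsto f (nhdsWithin 0 (Set.Ici (0:ℝ))) (nhds 0) := by
  rw [← Set.Ioi_insert, nhdsWithin_insert, tendsto_sup]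
  refine ⟨?_, h⟩
  have h2 := tendsto_pure_nhds f 0
  rwa [hf0] at h2

lemma tendsto_xlogx : Tendsto (fun x : ℝ => Real.log x * x) (nhdsWithin 0 (Set.Ici (0:ℝ))) (nhds 0) := by
  apply tendsto_right_zero (by simp)
  have := tendsto_log_mul_rpow_nhdsGT_zero (r := 1) one_pos
  refine this.congr' ?_
  filter_upwards [self_mem_nhdsWithin] with t ht
  rw [Real.rpow_one]

lemma tendsto_logmul_zero :
    Tendsto (fun x : ℝ => Real.log x * Real.log (1 - x)) (nhdsWithin 0 (Set.Icc (0:ℝ) 1)) (nhds 0) := by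
  apply squeeze_zero_norm' (a := fun x => 2 * ‖Real.log x * x‖)
  · have hmem : Set.Icc (0:ℝ) 1 ∩ Set.Iio (1/2) ∈ nhdsWithin 0 (Set.Icc (0:ℝ) 1) := by
      apply inter_mem self_mem_nhdsWithin
      exact nhdsWithin_le_nhds (Iio_mem_nhds (by norm_num))
    filter_upwards [hmem] with t ht
    obtain ⟨⟨ht0, ht1⟩, ht2⟩ := ht
    have ht2' : t < 1/2 := ht2
    rcases eq_or_lt_of_le ht0 with h | h
    · simp [← h]
    · have h1t : (0:ℝ) < 1 - t := by linarith
      have hb : |Real.log (1 - t)| ≤ 2 * t := by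
        rw [abs_of_nonpos (Real.log_nonpos (by linarith) (by linarith))]
        have h4 := Real.log_le_sub_one_of_pos (x := (1 - t)⁻¹) (by positivity)
        rw [Real.log_inv] at h4
        have h5 : (1 - t)⁻¹ - 1 = t / (1 - t) := by field_simp; ring
        have h6 : t / (1 - t) ≤ 2 * t := by
          rw [div_le_iff₀ h1t]; nlinarith
        linarith
      calc ‖Real.log t * Real.log (1 - t)‖ = |Real.log t| * |Real.log (1 - t)| := abs_mul _ _
        _ ≤ |Real.log t| * (2 * t) := by gcongr
        _ = 2 * ‖Real.log t * t‖ := by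
            rw [Real.norm_eq_abs, abs_mul, abs_of_nonneg ht0]; ring
  · have := (tendsto_xlogx.norm).const_mul (2:ℝ)
    simp only [norm_zero, mul_zero] at this
    exact this.mono_left (nhdsWithin_mono 0 Set.Icc_subset_Ici_self)

lemma tendsto_logmul_one :
    Tendsto (fun x : ℝ => Real.log x * Real.log (1 - x)) (nhdsWithin 1 (Set.Icc (0:ℝ) 1)) (nhds 0) := by
  have hc : Tendsto (fun x : ℝ => 1 - x) (nhdsWithin 1 (Set.Icc (0:ℝ) 1)) (nhdsWithin 0 (Set.Icc (0:ℝ) 1)) := by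
    rw [tendsto_nhdsWithin_iff]
    constructor
    · have h9 : Continuous (fun x : ℝ => 1 - x) := by fun_prop
      have h10 := h9.tendsto 1
      norm_num at h10
      exact h10.mono_left nhdsWithin_le_nhds
    · filter_upwards [self_mem_nhdsWithin] with t ⟨ht0, ht1⟩
      exact ⟨by linarith, by linarith⟩
  have := tendsto_logmul_zero.comp hc
  refine this.congr' ?_
  filter_upwards [self_mem_nhdsWithin] with t ht
  simp only [Function.comp_apply, sub_sub_cancel]
  ring

lemma RogersL_zero : RogersL 0 = 0 := by simp [RogersL, Li2_zero]

lemma RogersL_one : RogersL 1 = π ^ 2 / 6 := by simp [RogersL, Li2_one]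

lemma continuousOn_RogersL : ContinuousOn RogersL (Set.Icc 0 1) := by
  intro p hp
  have hli2 := continuousOn_Li2 p hp
  rcases eq_or_lt_of_le hp.1 with h0 | h0
  · subst h0
    rw [ContinuousWithinAt, RogersL_zero]
    have := hli2.tendsto
    rw [Li2_zero] at this
    have h2 := tendsto_logmul_zero.const_mul (1/2 : ℝ)
    rw [mul_zero] at h2
    have := this.add h2
    rw [add_zero] at this
    refine this.congr fun t => ?_
    rw [RogersL]; ring
  rcases eq_or_lt_of_le hp.2 with h1 | h1
  · rw [ContinuousWithinAt, h1, RogersL_one]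
    have := hli2.tendsto
    rw [h1, Li2_one] at this
    have h2 := tendsto_logmul_one.const_mul (1/2 : ℝ)
    rw [mul_zero] at h2
    have h3 := this.add h2
    rw [add_zero] at h3
    refine h3.congr fun t => ?_
    rw [RogersL]; ring
  · apply ContinuousAt.continuousWithinAt
    have : ContinuousAt (fun x => (1/2 : ℝ) * Real.log x * Real.log (1 - x)) p := by
      apply ContinuousAt.mul
      · exact (continuousAt_const.mul (Real.continuousAt_log (ne_of_gt h0)))
      · exact (Real.continuousAt_log (by linarith)).comp (by fun_prop)
    -- Li2 continuousAt interior: use congr with integral? simpler: ContinuousWithinAt on Icc + mem interior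
    have hint : ContinuousAt Li2 p :=
      continuousOn_Li2.continuousAt (Icc_mem_nhds h0 h1)
    exact hint.add this

lemma eq_const_of_deriv_zero {f : ℝ → ℝ} {c : ℝ}
    (hf : ∀ t ∈ Set.Ioo (0:ℝ) 1, HasDerivAt f 0 t)
    (hlim : Tendsto f (nhdsWithin 0 (Set.Ioi (0:ℝ))) (nhds c)) :
    ∀ x ∈ Set.Ioo (0:ℝ) 1, f x = c := by
  intro x hx
  have key : ∀ t ∈ Set.Ioo (0:ℝ) x, f x = f t := by
    intro t ht
    have hsub : Set.Icc t x ⊆ Set.Ioo (0:ℝ) 1 := fun z hz =>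
      ⟨lt_of_lt_of_le ht.1 hz.1, lt_of_le_of_lt hz.2 hx.2⟩
    have hcont : ContinuousOn f (Set.Icc t x) := fun z hz =>
      ((hf z (hsub hz)).continuousAt).continuousWithinAt
    have hder : ∀ z ∈ Set.Ico t x, HasDerivWithinAt f 0 (Set.Ici z) z := fun z hz =>
      (hf z (hsub ⟨hz.1, hz.2.le⟩)).hasDerivWithinAt
    exact constant_of_has_deriv_right_zero hcont hder x (Set.right_mem_Icc.mpr ht.2.le)
  have hIoo : Set.Ioo (0:ℝ) x ∈ nhdsWithin 0 (Set.Ioi (0:ℝ)) :=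
    Ioo_mem_nhdsGT_of_mem ⟨le_refl 0, hx.1⟩
  have hev : ∀ᶠ t in nhdsWithin 0 (Set.Ioi (0:ℝ)), f t = f x := by
    filter_upwards [hIoo] with t ht
    exact (key t ht).symm
  have h2 : Tendsto f (nhdsWithin 0 (Set.Ioi (0:ℝ))) (nhds (f x)) :=
    tendsto_const_nhds.congr' (hev.mono fun t h => h.symm)
  exact tendsto_nhds_unique h2 hlim

lemma tendsto_RogersL_comp {φ : ℝ → ℝ} {l : Filter ℝ} {p : ℝ} (hp : p ∈ Set.Icc (0:ℝ) 1)
    (h1 : Tendsto φ l (nhds p)) (h2 : ∀ᶠ z in l, φ z ∈ Set.Icc (0:ℝ) 1) :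
    Tendsto (fun z => RogersL (φ z)) l (nhds (RogersL p)) :=
  (continuousOn_RogersL p hp).tendsto.comp (tendsto_nhdsWithin_iff.mpr ⟨h1, h2⟩)

lemma Ioo_mem_right : Set.Ioo (0:ℝ) 1 ∈ nhdsWithin 0 (Set.Ioi (0:ℝ)) :=
  Ioo_mem_nhdsGT_of_mem ⟨le_refl 0, one_pos⟩

lemma RogersL_reflection {x : ℝ} (hx : x ∈ Set.Ioo (0:ℝ) 1) :
    RogersL x + RogersL (1 - x) = π ^ 2 / 6 := by
  have hderiv : ∀ t ∈ Set.Ioo (0:ℝ) 1, HasDerivAt (fun z => RogersL z + RogersL (1 - z)) 0 t := by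
    intro t ht
    obtain ⟨ht0, ht1⟩ := ht
    have h1 := hasDerivAt_RogersL ⟨ht0, ht1⟩
    have hmem : 1 - t ∈ Set.Ioo (0:ℝ) 1 := ⟨by linarith, by linarith⟩
    have h2 : HasDerivAt (fun z : ℝ => RogersL (1 - z))
        (-(Real.log (1 - (1 - t)) / (1 - t) + Real.log (1 - t) / (1 - (1 - t))) / 2 * -1) t :=
      (hasDerivAt_RogersL hmem).comp t ((hasDerivAt_id t).const_sub 1)
    have h3 := h1.add h2
    refine h3.congr_deriv ?_
    symm
    simp only [sub_sub_cancel]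
    ring
  have hlim : Tendsto (fun z => RogersL z + RogersL (1 - z)) (nhdsWithin 0 (Set.Ioi (0:ℝ)))
      (nhds (π ^ 2 / 6)) := by
    have t1 : Tendsto (fun z : ℝ => RogersL z) (nhdsWithin 0 (Set.Ioi (0:ℝ))) (nhds (RogersL 0)) := by
      apply tendsto_RogersL_comp (φ := id) (by norm_num) (tendsto_id.mono_left nhdsWithin_le_nhds)
      filter_upwards [Ioo_mem_right] with z hz
      exact ⟨hz.1.le, hz.2.le⟩
    have t2 : Tendsto (fun z : ℝ => RogersL (1 - z)) (nhdsWithin 0 (Set.Ioi (0:ℝ)))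
        (nhds (RogersL 1)) := by
      apply tendsto_RogersL_comp (by norm_num)
      · have h9 : Continuous (fun z : ℝ => 1 - z) := by fun_prop
        have h10 := h9.tendsto 0
        norm_num at h10
        exact h10.mono_left nhdsWithin_le_nhds
      · filter_upwards [Ioo_mem_right] with z hz
        exact ⟨by linarith [hz.2], by linarith [hz.1]⟩
    have := t1.add t2
    rw [RogersL_zero, RogersL_one, zero_add] at this
    exact this
  exact eq_const_of_deriv_zero hderiv hlim x hx

lemma args_mem {t y : ℝ} (ht : t ∈ Set.Ioo (0:ℝ) 1) (hy : y ∈ Set.Ioo (0:ℝ) 1) :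
    (1-t)/(1-t*y) ∈ Set.Ioo (0:ℝ) 1 ∧ (1-y)/(1-t*y) ∈ Set.Ioo (0:ℝ) 1 ∧
      1 - t*y ∈ Set.Ioo (0:ℝ) 1 := by
  obtain ⟨ht0, ht1⟩ := ht; obtain ⟨hy0, hy1⟩ := hy
  have h1 : t*y < t := by nlinarith
  have h2 : t*y < y := by nlinarith
  have h3 : 0 < 1 - t*y := by nlinarith
  have h4 : 0 < t*y := by positivity
  refine ⟨⟨div_pos (by linarith) h3, ?_⟩, ⟨div_pos (by linarith) h3, ?_⟩, by linarith, by linarith⟩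
  · rw [div_lt_one h3]; linarith
  · rw [div_lt_one h3]; linarith

/-- Five-term relation for the Rogers dilogarithm:
for `x, y ∈ (0,1)`,
`L(x) + L((1-x)/(1-xy)) + L((1-y)/(1-xy)) + L(y) + L(1-xy) = 3·L(1) = π²/2`. -/
theorem rogers_five_term (x y : ℝ) (hx : x ∈ Set.Ioo (0 : ℝ) 1)
    (hy : y ∈ Set.Ioo (0 : ℝ) 1) :
    RogersL x + RogersL ((1 - x) / (1 - x * y)) + RogersL ((1 - y) / (1 - x * y)) +
      RogersL y + RogersL (1 - x * y) = 3 * RogersL 1 ∧ 3 * RogersL 1 = π ^ 2 / 2 := by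
  obtain ⟨hy0, hy1⟩ := hy
  have hmain : ∀ z ∈ Set.Ioo (0:ℝ) 1,
      RogersL z + RogersL ((1 - z) / (1 - z * y)) + RogersL ((1 - y) / (1 - z * y)) +
        RogersL y + RogersL (1 - z * y) = π ^ 2 / 2 := by
    apply eq_const_of_deriv_zero
    · -- derivative zero
      intro t ht
      obtain ⟨hu, hv, hw⟩ := args_mem ht ⟨hy0, hy1⟩
      obtain ⟨ht0, ht1⟩ := ht
      have h3 : 0 < 1 - t*y := hw.1
      have h1t : (0:ℝ) < 1 - t := by linarith
      have h1y : (0:ℝ) < 1 - y := by linarith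
      -- derivatives of inner functions
      have hden : HasDerivAt (fun z : ℝ => 1 - z * y) (-y) t := by
        simpa using ((hasDerivAt_id t).mul_const y).const_sub 1
      have hnum1 : HasDerivAt (fun z : ℝ => 1 - z) (-1) t := (hasDerivAt_id t).const_sub 1
      have hU : HasDerivAt (fun z : ℝ => (1 - z) / (1 - z * y))
          ((-1 * (1 - t*y) - (1 - t) * (-y)) / (1 - t*y)^2) t :=
        hnum1.div hden h3.ne'
      have hV : HasDerivAt (fun z : ℝ => (1 - y) / (1 - z * y))
          ((0 * (1 - t*y) - (1 - y) * (-y)) / (1 - t*y)^2) t :=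
        (hasDerivAt_const t (1 - y)).div hden h3.ne'
      have hRU : HasDerivAt (fun z : ℝ => RogersL ((1 - z) / (1 - z * y)))
          (-(Real.log (1 - (1-t)/(1-t*y)) / ((1-t)/(1-t*y)) +
             Real.log ((1-t)/(1-t*y)) / (1 - (1-t)/(1-t*y))) / 2 *
           ((-1 * (1 - t*y) - (1 - t) * (-y)) / (1 - t*y)^2)) t :=
        by exact (hasDerivAt_RogersL hu).comp t hU
      have hRV : HasDerivAt (fun z : ℝ => RogersL ((1 - y) / (1 - z * y)))
          (-(Real.log (1 - (1-y)/(1-t*y)) / ((1-y)/(1-t*y)) +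
             Real.log ((1-y)/(1-t*y)) / (1 - (1-y)/(1-t*y))) / 2 *
           ((0 * (1 - t*y) - (1 - y) * (-y)) / (1 - t*y)^2)) t :=
        by exact (hasDerivAt_RogersL hv).comp t hV
      have hRW : HasDerivAt (fun z : ℝ => RogersL (1 - z * y))
          (-(Real.log (1 - (1 - t*y)) / (1 - t*y) +
             Real.log (1 - t*y) / (1 - (1 - t*y))) / 2 * (-y)) t :=
        by exact (hasDerivAt_RogersL hw).comp t hden
      have h1 := hasDerivAt_RogersL ⟨ht0, ht1⟩
      have H := (((h1.add hRU).add hRV).add_const (RogersL y)).add hRW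
      refine H.congr_deriv ?_
      symm
      -- show 0 = total derivative
      have e1 : 1 - (1-t)/(1-t*y) = t*(1-y)/(1-t*y) := by field_simp; ring
      have e2 : 1 - (1-y)/(1-t*y) = y*(1-t)/(1-t*y) := by rw [eq_div_iff h3.ne', sub_mul, div_mul_cancel₀ _ h3.ne']; ring
      have e3 : 1 - (1 - t*y) = t*y := by ring
      rw [e1, e2, e3]
      rw [Real.log_div (by positivity) h3.ne', Real.log_div (by positivity) h3.ne',
        Real.log_div (by positivity) h3.ne', Real.log_div (by positivity) h3.ne',
        Real.log_mul ht0.ne' h1y.ne', Real.log_mul hy0.ne' h1t.ne',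
        Real.log_mul ht0.ne' hy0.ne']
      field_simp
      ring
    · -- limit at 0⁺
      have t1 : Tendsto (fun z : ℝ => RogersL z) (nhdsWithin 0 (Set.Ioi (0:ℝ)))
          (nhds (RogersL 0)) := by
        apply tendsto_RogersL_comp (φ := id) (by norm_num) (tendsto_id.mono_left nhdsWithin_le_nhds)
        filter_upwards [Ioo_mem_right] with z hz
        exact ⟨hz.1.le, hz.2.le⟩
      have t2 : Tendsto (fun z : ℝ => RogersL ((1 - z) / (1 - z * y)))
          (nhdsWithin 0 (Set.Ioi (0:ℝ))) (nhds (RogersL 1)) := by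
        apply tendsto_RogersL_comp (by norm_num)
        · have hc : ContinuousAt (fun z : ℝ => (1 - z) / (1 - z * y)) 0 := by
            apply ContinuousAt.div (by fun_prop) (by fun_prop)
            norm_num
          have := hc.tendsto
          norm_num at this
          exact this.mono_left nhdsWithin_le_nhds
        · filter_upwards [Ioo_mem_right] with z hz
          have := (args_mem hz ⟨hy0, hy1⟩).1
          exact ⟨this.1.le, this.2.le⟩
      have t3 : Tendsto (fun z : ℝ => RogersL ((1 - y) / (1 - z * y)))
          (nhdsWithin 0 (Set.Ioi (0:ℝ))) (nhds (RogersL (1 - y))) := by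
        apply tendsto_RogersL_comp ⟨by linarith, by linarith⟩
        · have hc : ContinuousAt (fun z : ℝ => (1 - y) / (1 - z * y)) 0 := by
            apply ContinuousAt.div (by fun_prop) (by fun_prop)
            norm_num
          have := hc.tendsto
          norm_num at this
          exact this.mono_left nhdsWithin_le_nhds
        · filter_upwards [Ioo_mem_right] with z hz
          have := (args_mem hz ⟨hy0, hy1⟩).2.1
          exact ⟨this.1.le, this.2.le⟩
      have t5 : Tendsto (fun z : ℝ => RogersL (1 - z * y))
          (nhdsWithin 0 (Set.Ioi (0:ℝ))) (nhds (RogersL 1)) := by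
        apply tendsto_RogersL_comp (by norm_num)
        · have hc : ContinuousAt (fun z : ℝ => 1 - z * y) 0 := by fun_prop
          have := hc.tendsto
          norm_num at this
          exact this.mono_left nhdsWithin_le_nhds
        · filter_upwards [Ioo_mem_right] with z hz
          have := (args_mem hz ⟨hy0, hy1⟩).2.2
          exact ⟨this.1.le, this.2.le⟩
      have t4 : Tendsto (fun _ : ℝ => RogersL y) (nhdsWithin 0 (Set.Ioi (0:ℝ)))
          (nhds (RogersL y)) := tendsto_const_nhds
      have hT := (((t1.add t2).add t3).add t4).add t5
      have hrefl := RogersL_reflection (x := y) ⟨hy0, hy1⟩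
      have hval : RogersL 0 + RogersL 1 + RogersL (1 - y) + RogersL y + RogersL 1
          = π ^ 2 / 2 := by
        rw [RogersL_zero, RogersL_one]
        have : RogersL (1 - y) + RogersL y = π ^ 2 / 6 := by rw [add_comm]; exact hrefl
        linarith
      rw [hval] at hT
      exact hT
  refine ⟨?_, ?_⟩
  · rw [hmain x hx]
    rw [RogersL_one]
    ring
  · rw [RogersL_one]
    ring
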